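/- Fix b > 0. For ε ∈ (0, 1/(12b²)) the function p_ε(z) = z − 4εz³ (the derivative of l_ε(z) = z²/2 − εz⁴) is strictly increasing on [0,b]; let h_ε : [0, p_ε(b)] → [0,b] denote its inverse, and set A_ε(z) = 1/h_ε'(z), B_ε(z) = z/h_ε(z), α_ε(z) = (z²·A_ε''(z) + 6(A_ε(z) − B_ε(z)) − 4z(A_ε'(z) − B_ε'(z)))/z², β_ε(z) = (z·A_ε'(z) − 2(A_ε(z) − B_ε(z)))/z², γ_ε(z) = B_ε''(z), δ_ε(z) = B_ε'(z)/z. Then there exists ε₀ ∈ (0, 1/(12b²)) such that for every ε ∈ (0, ε₀) and every z ∈ (0, p_ε(b)]: β_ε(z) < 0, γ_ε(z) < 0, δ_ε(z) < 0, and α_ε(z) + δ_ε(z) < 2√(β_ε(z)·γ_ε(z)). -/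

import Mathlib

/-- `α(z)` built from `A, B` using one-sided (within `S`) derivatives. -/
noncomputable def mtwAlphaW (S : Set ℝ) (A B : ℝ → ℝ) (z : ℝ) : ℝ :=
  (z ^ 2 * derivWithin (fun y => derivWithin A S y) S z + 6 * (A z - B z) -
    4 * z * (derivWithin A S z - derivWithin B S z)) / z ^ 2

/-- `β(z)` built from `A, B` using derivatives within `S`. -/
noncomputable def mtwBetaW (S : Set ℝ) (A B : ℝ → ℝ) (z : ℝ) : ℝ :=
  (z * derivWithin A S z - 2 * (A z - B z)) / z ^ 2

/-- `γ(z) = B''(z)` using derivatives within `S`. -/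
noncomputable def mtwGammaW (S : Set ℝ) (B : ℝ → ℝ) (z : ℝ) : ℝ :=
  derivWithin (fun y => derivWithin B S y) S z

/-- `δ(z) = B'(z)/z` using the derivative within `S`. -/
noncomputable def mtwDeltaW (S : Set ℝ) (B : ℝ → ℝ) (z : ℝ) : ℝ :=
  derivWithin B S z / z

open Set Filter Topology

section Aux

variable {b ε : ℝ}

lemma mtw_den_lb (hb : 0 < b) (hε : 0 < ε) (hεb : ε * b ^ 2 < 1 / 100)
    {u v : ℝ} (hu : u ∈ Set.Icc (0:ℝ) b) (hv : v ∈ Set.Icc (0:ℝ) b) :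
    (22:ℝ)/25 ≤ 1 - 4 * ε * (u ^ 2 + u * v + v ^ 2) := by
  obtain ⟨hu0, hub⟩ := hu
  obtain ⟨hv0, hvb⟩ := hv
  have h1 : u ^ 2 + u * v + v ^ 2 ≤ 3 * b ^ 2 := by nlinarith
  have h2 : ε * (u ^ 2 + u * v + v ^ 2) ≤ ε * (3 * b ^ 2) :=
    mul_le_mul_of_nonneg_left h1 hε.le
  nlinarith

/-- h has the expected one-sided derivative within `S` at every point of `S`. -/
lemma mtw_hasDeriv (hb : 0 < b) (hε : 0 < ε) (hεb : ε * b ^ 2 < 1 / 100)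
    (h : ℝ → ℝ)
    (hinv2 : ∀ z ∈ Set.Icc (0:ℝ) (b - 4 * ε * b ^ 3),
      h z ∈ Set.Icc (0:ℝ) b ∧ h z - 4 * ε * (h z) ^ 3 = z)
    {y : ℝ} (hy : y ∈ Set.Icc (0:ℝ) (b - 4 * ε * b ^ 3)) :
    HasDerivWithinAt h (1 / (1 - 12 * ε * (h y) ^ 2))
      (Set.Icc (0:ℝ) (b - 4 * ε * b ^ 3)) y := by
  set S := Set.Icc (0:ℝ) (b - 4 * ε * b ^ 3) with hS
  obtain ⟨huy, hpy⟩ := hinv2 y hy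
  have hDy : 0 < 1 - 12 * ε * (h y) ^ 2 := by
    have h1 : ε * (h y) ^ 2 ≤ ε * b ^ 2 := by
      apply mul_le_mul_of_nonneg_left _ hε.le
      nlinarith [huy.1, huy.2]
    nlinarith
  -- continuity of h within S at y
  have hcont : Tendsto h (𝓝[S] y) (𝓝 (h y)) := by
    have hsq : Tendsto (fun x => h x - h y) (𝓝[S] y) (𝓝 0) := by
      apply squeeze_zero_norm' (a := fun x => 2 * |x - y|)
      · filter_upwards [self_mem_nhdsWithin] with x hx
        obtain ⟨hux, hpx⟩ := hinv2 x hx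
        have hfac : x - y = (h x - h y) * (1 - 4 * ε * ((h y) ^ 2 + h y * h x + (h x) ^ 2)) := by
          linear_combination hpy - hpx
        have hden := mtw_den_lb hb hε hεb huy hux
        have habs : |x - y| = |h x - h y| * |1 - 4 * ε * ((h y) ^ 2 + h y * h x + (h x) ^ 2)| := by
          rw [hfac, abs_mul]
        have hge : (22:ℝ)/25 ≤ |1 - 4 * ε * ((h y) ^ 2 + h y * h x + (h x) ^ 2)| :=
          le_trans hden (le_abs_self _)
        have h3 := abs_nonneg (h x - h y)
        have h4 := abs_nonneg (x - y)
        simp only [Real.norm_eq_abs]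
        nlinarith [mul_le_mul_of_nonneg_left hge h3]
      · have : Tendsto (fun x : ℝ => 2 * |x - y|) (𝓝 y) (𝓝 (2 * |y - y|)) :=
          (continuous_const.mul ((continuous_id.sub continuous_const).abs)).tendsto y
        simp only [sub_self, abs_zero, mul_zero] at this
        exact this.mono_left nhdsWithin_le_nhds
    have := hsq.add_const (h y)
    simpa using this
  rw [hasDerivWithinAt_iff_tendsto_slope]
  have h1 : Tendsto h (𝓝[S \ {y}] y) (𝓝 (h y)) :=
    hcont.mono_left (nhdsWithin_mono _ diff_subset)
  have h2 : ContinuousAt (fun t => (1 - 4 * ε * ((h y) ^ 2 + h y * t + t ^ 2))⁻¹) (h y) := by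
    apply ContinuousAt.inv₀ (by fun_prop)
    have heq : 1 - 4 * ε * ((h y) ^ 2 + h y * h y + (h y) ^ 2) = 1 - 12 * ε * (h y) ^ 2 := by ring
    rw [heq]; exact ne_of_gt hDy
  have hF : Tendsto (fun x => (1 - 4 * ε * ((h y) ^ 2 + h y * h x + (h x) ^ 2))⁻¹)
      (𝓝[S \ {y}] y) (𝓝 (1 / (1 - 12 * ε * (h y) ^ 2))) := by
    have := h2.tendsto.comp h1
    have heq : (1:ℝ) / (1 - 12 * ε * (h y) ^ 2)
        = (1 - 4 * ε * ((h y) ^ 2 + h y * h y + (h y) ^ 2))⁻¹ := by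
      rw [one_div]; ring_nf
    rw [heq]
    exact this
  apply hF.congr'
  filter_upwards [self_mem_nhdsWithin] with x hx
  obtain ⟨hxS, hxne⟩ := hx
  obtain ⟨hux, hpx⟩ := hinv2 x hxS
  have hfac : x - y = (h x - h y) * (1 - 4 * ε * ((h y) ^ 2 + h y * h x + (h x) ^ 2)) := by
    linear_combination hpy - hpx
  have hne : h x - h y ≠ 0 := by
    intro hq
    apply hxne
    have hxy : h x = h y := by linarith
    have : x = y := by rw [← hpx, ← hpy, hxy]
    simpa using this
  rw [slope_def_field, hfac, div_mul_cancel_left₀ hne]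

end Aux

section Aux2

variable {b ε : ℝ}

lemma mtw_Dpos (hb : 0 < b) (hε : 0 < ε) (hεb : ε * b ^ 2 < 1 / 100)
    {u : ℝ} (hu : u ∈ Set.Icc (0:ℝ) b) : 0 < 1 - 12 * ε * u ^ 2 := by
  have h1 : ε * u ^ 2 ≤ ε * b ^ 2 := by
    apply mul_le_mul_of_nonneg_left _ hε.le
    nlinarith [hu.1, hu.2]
  nlinarith

lemma mtw_main (hb : 0 < b) (hε : 0 < ε) (hεb : ε * b ^ 2 < 1 / 100)
    (h : ℝ → ℝ)
    (hinv2 : ∀ z ∈ Set.Icc (0:ℝ) (b - 4 * ε * b ^ 3),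
      h z ∈ Set.Icc (0:ℝ) b ∧ h z - 4 * ε * (h z) ^ 3 = z)
    {z : ℝ} (hz : z ∈ Set.Ioc (0:ℝ) (b - 4 * ε * b ^ 3)) :
    derivWithin (fun x => 1 / derivWithin h (Set.Icc (0:ℝ) (b - 4 * ε * b ^ 3)) x)
        (Set.Icc (0:ℝ) (b - 4 * ε * b ^ 3)) z
      = -24 * ε * h z / (1 - 12 * ε * (h z) ^ 2) ∧
    derivWithin (fun y => derivWithin (fun x => 1 / derivWithin h (Set.Icc (0:ℝ) (b - 4 * ε * b ^ 3)) x)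
        (Set.Icc (0:ℝ) (b - 4 * ε * b ^ 3)) y) (Set.Icc (0:ℝ) (b - 4 * ε * b ^ 3)) z
      = -24 * ε * (1 + 12 * ε * (h z) ^ 2) / (1 - 12 * ε * (h z) ^ 2) ^ 3 ∧
    derivWithin (fun x => x / h x) (Set.Icc (0:ℝ) (b - 4 * ε * b ^ 3)) z
      = -8 * ε * h z / (1 - 12 * ε * (h z) ^ 2) ∧
    derivWithin (fun y => derivWithin (fun x => x / h x) (Set.Icc (0:ℝ) (b - 4 * ε * b ^ 3)) y)
        (Set.Icc (0:ℝ) (b - 4 * ε * b ^ 3)) z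
      = -8 * ε * (1 + 12 * ε * (h z) ^ 2) / (1 - 12 * ε * (h z) ^ 2) ^ 3 ∧
    (1 / derivWithin h (Set.Icc (0:ℝ) (b - 4 * ε * b ^ 3)) z = 1 - 12 * ε * (h z) ^ 2) ∧
    z / h z = 1 - 4 * ε * (h z) ^ 2 := by
  obtain ⟨hz0, hzle⟩ := hz
  have hzb : 0 < b - 4 * ε * b ^ 3 := by
    nlinarith [mul_lt_mul_of_pos_right hεb (show (0:ℝ) < 4 * b by positivity), hb]
  set S := Set.Icc (0:ℝ) (b - 4 * ε * b ^ 3) with hS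
  have hUD : UniqueDiffOn ℝ S := uniqueDiffOn_Icc hzb
  have hzS : z ∈ S := ⟨hz0.le, hzle⟩
  have hdW : ∀ y ∈ S, derivWithin h S y = 1 / (1 - 12 * ε * (h y) ^ 2) := fun y hy =>
    (mtw_hasDeriv hb hε hεb h hinv2 hy).derivWithin (hUD y hy)
  have hAeq : Set.EqOn (fun x => 1 / derivWithin h S x) (fun x => 1 - 12 * ε * (h x) ^ 2) S := by
    intro y hy
    simp only
    rw [hdW y hy, one_div_one_div]
  have hAt' : ∀ y ∈ S, HasDerivWithinAt (fun x => 1 - 12 * ε * (h x) ^ 2)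
      (-24 * ε * h y / (1 - 12 * ε * (h y) ^ 2)) S y := by
    intro y hy
    have H := mtw_hasDeriv hb hε hεb h hinv2 hy
    have H2 := ((H.pow 2).const_mul (12 * ε)).const_sub 1
    refine H2.congr_deriv ?_
    have hD := (mtw_Dpos hb hε hεb (hinv2 y hy).1).ne'
    field_simp
    ring_nf
  have hA'W : ∀ y ∈ S, derivWithin (fun x => 1 / derivWithin h S x) S y
      = -24 * ε * h y / (1 - 12 * ε * (h y) ^ 2) := by
    intro y hy
    rw [derivWithin_congr hAeq (hAeq hy)]
    exact (hAt' y hy).derivWithin (hUD y hy)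
  -- second derivative of A
  have hA''W : derivWithin (fun y => derivWithin (fun x => 1 / derivWithin h S x) S y) S z
      = -24 * ε * (1 + 12 * ε * (h z) ^ 2) / (1 - 12 * ε * (h z) ^ 2) ^ 3 := by
    have hEq : Set.EqOn (fun y => derivWithin (fun x => 1 / derivWithin h S x) S y)
        (fun y => -24 * ε * h y / (1 - 12 * ε * (h y) ^ 2)) S := fun y hy => hA'W y hy
    rw [derivWithin_congr hEq (hEq hzS)]
    have hD := mtw_Dpos hb hε hεb (hinv2 z hzS).1
    have hφ : HasDerivAt (fun t => -24 * ε * t / (1 - 12 * ε * t ^ 2))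
        (-24 * ε * (1 + 12 * ε * (h z) ^ 2) / (1 - 12 * ε * (h z) ^ 2) ^ 2) (h z) := by
      have hnum : HasDerivAt (fun t : ℝ => -24 * ε * t) (-24 * ε) (h z) := by
        simpa using (hasDerivAt_id (h z)).const_mul (-24 * ε)
      have hden : HasDerivAt (fun t : ℝ => 1 - 12 * ε * t ^ 2)
          (-(12 * ε * ((2 : ℕ) * (h z) ^ (2 - 1)))) (h z) :=
        ((hasDerivAt_pow 2 (h z)).const_mul (12 * ε)).const_sub 1
      have := hnum.div hden hD.ne'
      refine this.congr_deriv ?_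
      field_simp
      ring
    have hcomp := (hφ.comp_hasDerivWithinAt z (mtw_hasDeriv hb hε hεb h hinv2 hzS)).derivWithin
      (hUD z hzS)
    simp only [Function.comp_def] at hcomp
    rw [hcomp]
    field_simp
  -- B facts
  have hhpos : ∀ x ∈ S, 0 < x → 0 < h x := by
    intro x hx hx0
    obtain ⟨hm, hp⟩ := hinv2 x hx
    rcases lt_or_eq_of_le hm.1 with H | H
    · exact H
    · exfalso
      rw [← H] at hp
      norm_num at hp
      linarith
  have hBeqS : ∀ x ∈ S, 0 < x → x / h x = 1 - 4 * ε * (h x) ^ 2 := by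
    intro x hx hx0
    have hp := (hinv2 x hx).2
    have h0 := hhpos x hx hx0
    field_simp
    linear_combination -hp
  have hBt' : ∀ y ∈ S, HasDerivWithinAt (fun x => 1 - 4 * ε * (h x) ^ 2)
      (-8 * ε * h y / (1 - 12 * ε * (h y) ^ 2)) S y := by
    intro y hy
    have H := mtw_hasDeriv hb hε hεb h hinv2 hy
    have H2 := ((H.pow 2).const_mul (4 * ε)).const_sub 1
    refine H2.congr_deriv ?_
    have hD := (mtw_Dpos hb hε hεb (hinv2 y hy).1).ne'
    field_simp
    ring_nf
  have hB'W : ∀ y ∈ S, 0 < y → derivWithin (fun x => x / h x) S y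
      = -8 * ε * h y / (1 - 12 * ε * (h y) ^ 2) := by
    intro y hy hy0
    have hevEq : (fun x => x / h x) =ᶠ[𝓝[S] y] (fun x => 1 - 4 * ε * (h x) ^ 2) := by
      filter_upwards [self_mem_nhdsWithin,
        (eventually_gt_nhds hy0).filter_mono nhdsWithin_le_nhds] with x hxS hx0
      exact hBeqS x hxS hx0
    rw [hevEq.derivWithin_eq (hBeqS y hy hy0)]
    exact (hBt' y hy).derivWithin (hUD y hy)
  have hB''W : derivWithin (fun y => derivWithin (fun x => x / h x) S y) S z
      = -8 * ε * (1 + 12 * ε * (h z) ^ 2) / (1 - 12 * ε * (h z) ^ 2) ^ 3 := by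
    have hevEq : (fun y => derivWithin (fun x => x / h x) S y)
        =ᶠ[𝓝[S] z] (fun y => -8 * ε * h y / (1 - 12 * ε * (h y) ^ 2)) := by
      filter_upwards [self_mem_nhdsWithin,
        (eventually_gt_nhds hz0).filter_mono nhdsWithin_le_nhds] with x hxS hx0
      exact hB'W x hxS hx0
    rw [hevEq.derivWithin_eq (hB'W z hzS hz0)]
    have hD := mtw_Dpos hb hε hεb (hinv2 z hzS).1
    have hφ : HasDerivAt (fun t => -8 * ε * t / (1 - 12 * ε * t ^ 2))
        (-8 * ε * (1 + 12 * ε * (h z) ^ 2) / (1 - 12 * ε * (h z) ^ 2) ^ 2) (h z) := by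
      have hnum : HasDerivAt (fun t : ℝ => -8 * ε * t) (-8 * ε) (h z) := by
        simpa using (hasDerivAt_id (h z)).const_mul (-8 * ε)
      have hden : HasDerivAt (fun t : ℝ => 1 - 12 * ε * t ^ 2)
          (-(12 * ε * ((2 : ℕ) * (h z) ^ (2 - 1)))) (h z) :=
        ((hasDerivAt_pow 2 (h z)).const_mul (12 * ε)).const_sub 1
      have := hnum.div hden hD.ne'
      refine this.congr_deriv ?_
      field_simp
      ring
    have hcomp := (hφ.comp_hasDerivWithinAt z (mtw_hasDeriv hb hε hεb h hinv2 hzS)).derivWithin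
      (hUD z hzS)
    simp only [Function.comp_def] at hcomp
    rw [hcomp]
    field_simp
  exact ⟨hA'W z hzS, hA''W, hB'W z hzS hz0, hB''W, hAeq hzS, hBeqS z hzS hz0⟩

end Aux2

lemma mtw_final {b ε : ℝ} (hb : 0 < b) (hε : 0 < ε) (hεb : ε * b ^ 2 < 1 / 100)
    (h : ℝ → ℝ)
    (hinv2 : ∀ z ∈ Set.Icc (0:ℝ) (b - 4 * ε * b ^ 3),
      h z ∈ Set.Icc (0:ℝ) b ∧ h z - 4 * ε * (h z) ^ 3 = z)
    {z : ℝ} (hz : z ∈ Set.Ioc (0:ℝ) (b - 4 * ε * b ^ 3)) :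
    mtwBetaW (Set.Icc (0:ℝ) (b - 4 * ε * b ^ 3))
        (fun y => 1 / derivWithin h (Set.Icc (0:ℝ) (b - 4 * ε * b ^ 3)) y) (fun y => y / h y) z < 0 ∧
    mtwGammaW (Set.Icc (0:ℝ) (b - 4 * ε * b ^ 3)) (fun y => y / h y) z < 0 ∧
    mtwDeltaW (Set.Icc (0:ℝ) (b - 4 * ε * b ^ 3)) (fun y => y / h y) z < 0 ∧
    mtwAlphaW (Set.Icc (0:ℝ) (b - 4 * ε * b ^ 3))
        (fun y => 1 / derivWithin h (Set.Icc (0:ℝ) (b - 4 * ε * b ^ 3)) y) (fun y => y / h y) z +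
      mtwDeltaW (Set.Icc (0:ℝ) (b - 4 * ε * b ^ 3)) (fun y => y / h y) z <
      2 * Real.sqrt (mtwBetaW (Set.Icc (0:ℝ) (b - 4 * ε * b ^ 3))
        (fun y => 1 / derivWithin h (Set.Icc (0:ℝ) (b - 4 * ε * b ^ 3)) y) (fun y => y / h y) z *
        mtwGammaW (Set.Icc (0:ℝ) (b - 4 * ε * b ^ 3)) (fun y => y / h y) z) := by
  obtain ⟨hA', hA'', hB', hB'', hAv, hBv⟩ := mtw_main hb hε hεb h hinv2 hz
  obtain ⟨hz0, hzle⟩ := hz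
  obtain ⟨humem, hpz⟩ := hinv2 z ⟨hz0.le, hzle⟩
  have hu0 : 0 < h z := by
    rcases lt_or_eq_of_le humem.1 with H | H
    · exact H
    · exfalso; rw [← H] at hpz; norm_num at hpz; linarith
  have hub : h z ≤ b := humem.2
  have hs2 : ε * (h z) ^ 2 < 1 / 100 :=
    lt_of_le_of_lt (mul_le_mul_of_nonneg_left (by nlinarith) hε.le) hεb
  have hD : 0 < 1 - 12 * ε * (h z) ^ 2 := by nlinarith
  have hE : 0 < 1 - 4 * ε * (h z) ^ 2 := by nlinarith
  have hzu : z = h z * (1 - 4 * ε * (h z) ^ 2) := by linear_combination -hpz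
  simp only [mtwBetaW, mtwGammaW, mtwDeltaW, mtwAlphaW]
  rw [hA', hA'', hB', hB'', hAv, hBv]
  set u := h z with hu
  clear_value u
  clear hA' hA'' hB' hB'' hAv hBv hu hinv2 humem hpz
  have hεu : 0 < ε * u ^ 2 := mul_pos hε (pow_pos hu0 2)
  refine ⟨?_, ?_, ?_, ?_⟩
  · rw [hzu]
    have e : u * (1 - 4 * ε * u ^ 2) * (-24 * ε * u / (1 - 12 * ε * u ^ 2)) -
        2 * (1 - 12 * ε * u ^ 2 - (1 - 4 * ε * u ^ 2))
        = -8 * ε * u ^ 2 * (1 + 12 * ε * u ^ 2) / (1 - 12 * ε * u ^ 2) := by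
      obtain ⟨dd, hdd⟩ : ∃ dd, dd = 1 - 12 * ε * u ^ 2 := ⟨_, rfl⟩
      obtain ⟨ee, hee⟩ : ∃ ee, ee = 1 - 4 * ε * u ^ 2 := ⟨_, rfl⟩
      have hdd0 : dd ≠ 0 := hdd ▸ hD.ne'
      have hee0 : ee ≠ 0 := hee ▸ hE.ne'
      have hu00 := hu0.ne'
      rw [← hdd, ← hee]
      field_simp
      rw [hdd, hee]
      ring
    rw [e]
    exact div_neg_of_neg_of_pos (div_neg_of_neg_of_pos (by nlinarith) hD) (by positivity)
  · exact div_neg_of_neg_of_pos (by nlinarith) (by positivity)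
  · exact div_neg_of_neg_of_pos (div_neg_of_neg_of_pos (by nlinarith [mul_pos hε hu0]) hD) hz0
  · rw [hzu]
    have hsq : (u * (1 - 4 * ε * u ^ 2) * (-24 * ε * u / (1 - 12 * ε * u ^ 2)) -
          2 * (1 - 12 * ε * u ^ 2 - (1 - 4 * ε * u ^ 2))) / (u * (1 - 4 * ε * u ^ 2)) ^ 2 *
          (-8 * ε * (1 + 12 * ε * u ^ 2) / (1 - 12 * ε * u ^ 2) ^ 3)
        = (8 * ε * (1 + 12 * ε * u ^ 2) / ((1 - 12 * ε * u ^ 2) ^ 2 * (1 - 4 * ε * u ^ 2))) ^ 2 := by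
      obtain ⟨dd, hdd⟩ : ∃ dd, dd = 1 - 12 * ε * u ^ 2 := ⟨_, rfl⟩
      obtain ⟨ee, hee⟩ : ∃ ee, ee = 1 - 4 * ε * u ^ 2 := ⟨_, rfl⟩
      have hdd0 : dd ≠ 0 := hdd ▸ hD.ne'
      have hee0 : ee ≠ 0 := hee ▸ hE.ne'
      have hu00 := hu0.ne'
      rw [← hdd, ← hee]
      field_simp
      rw [hdd, hee]
      ring
    rw [hsq, Real.sqrt_sq (by positivity)]
    have hdiff : 2 * (8 * ε * (1 + 12 * ε * u ^ 2) / ((1 - 12 * ε * u ^ 2) ^ 2 * (1 - 4 * ε * u ^ 2))) -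
        (((u * (1 - 4 * ε * u ^ 2)) ^ 2 * (-24 * ε * (1 + 12 * ε * u ^ 2) / (1 - 12 * ε * u ^ 2) ^ 3) +
            6 * (1 - 12 * ε * u ^ 2 - (1 - 4 * ε * u ^ 2)) -
          4 * (u * (1 - 4 * ε * u ^ 2)) * (-24 * ε * u / (1 - 12 * ε * u ^ 2) - -8 * ε * u / (1 - 12 * ε * u ^ 2))) /
        (u * (1 - 4 * ε * u ^ 2)) ^ 2 +
      -8 * ε * u / (1 - 12 * ε * u ^ 2) / (u * (1 - 4 * ε * u ^ 2)))
        = ε * (32 - 128 * (ε * u ^ 2) + 3072 * (ε * u ^ 2) ^ 2 - 36864 * (ε * u ^ 2) ^ 3) /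
            ((1 - 12 * ε * u ^ 2) ^ 3 * (1 - 4 * ε * u ^ 2) ^ 2) := by
      obtain ⟨dd, hdd⟩ : ∃ dd, dd = 1 - 12 * ε * u ^ 2 := ⟨_, rfl⟩
      obtain ⟨ee, hee⟩ : ∃ ee, ee = 1 - 4 * ε * u ^ 2 := ⟨_, rfl⟩
      have hdd0 : dd ≠ 0 := hdd ▸ hD.ne'
      have hee0 : ee ≠ 0 := hee ▸ hE.ne'
      have hu00 := hu0.ne'
      rw [← hdd, ← hee]
      field_simp
      rw [hdd, hee]
      ring
    have hnum : 0 < ε * (32 - 128 * (ε * u ^ 2) + 3072 * (ε * u ^ 2) ^ 2 - 36864 * (ε * u ^ 2) ^ 3) := by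
      apply mul_pos hε
      nlinarith [hεu, hs2, mul_pos hεu hεu, mul_lt_mul_of_pos_left hs2 hεu,
        mul_pos (mul_pos hεu hεu) hεu]
    have hpos : 0 < ε * (32 - 128 * (ε * u ^ 2) + 3072 * (ε * u ^ 2) ^ 2 - 36864 * (ε * u ^ 2) ^ 3) /
        ((1 - 12 * ε * u ^ 2) ^ 3 * (1 - 4 * ε * u ^ 2) ^ 2) := div_pos hnum (by positivity)
    linarith [hdiff, hpos]

/-- For `l_ε(z) = z²/2 - ε z⁴`, whose derivative is `p_ε(z) = z - 4εz³`:
for `ε ∈ (0, 1/(12b²))` the map `p_ε` is strictly increasing on `[0,b]`, and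
there is `ε₀ ∈ (0, 1/(12b²))` such that for every `ε ∈ (0, ε₀)` and every
inverse `h` of `p_ε` between `[0,b]` and `[0, p_ε(b)]`, the quantities
`α, β, γ, δ` built from `A = 1/h'` and `B(z) = z/h(z)` satisfy the strict
Ma-Trudinger-Wang inequalities on `(0, p_ε(b)]`. -/
theorem stmt_17 (b : ℝ) (hb : 0 < b) :
    (∀ ε ∈ Set.Ioo (0 : ℝ) (1 / (12 * b ^ 2)),
      StrictMonoOn (fun z => z - 4 * ε * z ^ 3) (Set.Icc 0 b)) ∧
    ∃ ε₀ ∈ Set.Ioo (0 : ℝ) (1 / (12 * b ^ 2)), ∀ ε ∈ Set.Ioo (0 : ℝ) ε₀,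
      ∀ h : ℝ → ℝ,
        (∀ z ∈ Set.Icc (0 : ℝ) b, h (z - 4 * ε * z ^ 3) = z) →
        (∀ z ∈ Set.Icc (0 : ℝ) (b - 4 * ε * b ^ 3),
          h z ∈ Set.Icc (0 : ℝ) b ∧ h z - 4 * ε * (h z) ^ 3 = z) →
        let S := Set.Icc (0 : ℝ) (b - 4 * ε * b ^ 3)
        let A : ℝ → ℝ := fun y => 1 / derivWithin h S y
        let B : ℝ → ℝ := fun y => y / h y
        ∀ z ∈ Set.Ioc (0 : ℝ) (b - 4 * ε * b ^ 3),
          mtwBetaW S A B z < 0 ∧ mtwGammaW S B z < 0 ∧ mtwDeltaW S B z < 0 ∧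
          mtwAlphaW S A B z + mtwDeltaW S B z <
            2 * Real.sqrt (mtwBetaW S A B z * mtwGammaW S B z) := by
  constructor
  · rintro ε ⟨hε0, hε1⟩ x hx y hy hxy
    simp only
    have hb2 : (0:ℝ) < 12 * b ^ 2 := by positivity
    have h12 : ε * (12 * b ^ 2) < 1 := (lt_div_iff₀ hb2).mp hε1
    have hsum : x ^ 2 + x * y + y ^ 2 ≤ 3 * b ^ 2 := by
      nlinarith [hx.1, hx.2, hy.1, hy.2]
    have hd : 0 < 1 - 4 * ε * (x ^ 2 + x * y + y ^ 2) := by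
      nlinarith [mul_le_mul_of_nonneg_left hsum hε0.le]
    nlinarith [mul_pos (sub_pos.2 hxy) hd]
  · refine ⟨1 / (100 * b ^ 2), ⟨by positivity, ?_⟩, ?_⟩
    · rw [div_lt_div_iff₀ (by positivity) (by positivity)]
      nlinarith
    · rintro ε ⟨hε0, hε1⟩ h hinv1 hinv2
      intro S A B z hz
      have hεb : ε * b ^ 2 < 1 / 100 := by
        rw [lt_div_iff₀ (by positivity : (0:ℝ) < 100 * b ^ 2)] at hε1
        nlinarith
      exact mtw_final hb hε0 hεb h hinv2 hz
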